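/- There are exactly five isomorphism classes of BCR diagrams of degree 2 (that is, with 4 vertices), where an isomorphism of BCR diagrams is a bijection between the vertex sets that preserves the partition into internal and external vertices and induces a bijection between the edge sets preserving the partition into internal and external edges. -/

import Mathlib

open Finset

/-- A finite directed graph with a distinguished set of internal vertices `Vi`
and a distinguished set of internal edges `Ei`. Edges are ordered pairs of
vertices, so there are no multiple edges with the same orientation. -/
structure DiGraph (V : Type*) [DecidableEq V] [Fintype V] where
  E : Finset (V × V)
  Vi : Finset V
  Ei : Finset (V × V)

namespace DiGraph

variable {V : Type*} [DecidableEq V] [Fintype V] (G : DiGraph V)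

/-- The external edges. -/
def Ee : Finset (V × V) := G.E \ G.Ei

/-- The external vertices. -/
def Ve : Finset V := G.Viᶜ

/-- The edges going out of `v`. -/
def outE (v : V) : Finset (V × V) := G.E.filter fun e => e.1 = v

/-- The edges coming into `v`. -/
def inE (v : V) : Finset (V × V) := G.E.filter fun e => e.2 = v

/-- The valence of a vertex. -/
def valence (v : V) : ℕ := (G.outE v).card + (G.inE v).card

def Univalent (v : V) : Prop := G.valence v = 1

def Bivalent (v : V) : Prop := G.valence v = 2

def Trivalent (v : V) : Prop := G.valence v = 3

/-- A leg is an external edge whose source is a univalent vertex. -/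
def IsLeg (e : V × V) : Prop := e ∈ G.Ee ∧ G.Univalent e.1

/-- `v` is external and trivalent, with two incoming external edges and one
outgoing external edge, and one of the incoming edges comes from a univalent
vertex. -/
def Cond1 (v : V) : Prop :=
  v ∉ G.Vi ∧
  (∃ e, G.outE v = {e} ∧ e ∈ G.Ee) ∧
  (∃ e f, e ≠ f ∧ G.inE v = {e, f} ∧ e ∈ G.Ee ∧ f ∈ G.Ee) ∧
  (∃ e ∈ G.inE v, G.Univalent e.1)

/-- `v` is internal and trivalent, with one incoming internal edge, one
outgoing internal edge, and one incoming external edge coming from a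
univalent vertex. -/
def Cond2 (v : V) : Prop :=
  v ∈ G.Vi ∧
  (∃ e, G.outE v = {e} ∧ e ∈ G.Ei) ∧
  (∃ e f, e ≠ f ∧ G.inE v = {e, f} ∧ e ∈ G.Ei ∧ f ∈ G.Ee ∧ G.Univalent f.1)

/-- `v` is internal and univalent, with one outgoing external edge. -/
def Cond3 (v : V) : Prop :=
  v ∈ G.Vi ∧ (∃ e, G.outE v = {e} ∧ e ∈ G.Ee) ∧ G.inE v = ∅

/-- `v` is internal and bivalent, with one incoming external edge and one
outgoing internal edge. -/
def Cond4 (v : V) : Prop :=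
  v ∈ G.Vi ∧ (∃ e, G.outE v = {e} ∧ e ∈ G.Ei) ∧ (∃ f, G.inE v = {f} ∧ f ∈ G.Ee)

/-- `v` is internal and bivalent, with one incoming internal edge and one
outgoing external edge. -/
def Cond5 (v : V) : Prop :=
  v ∈ G.Vi ∧ (∃ e, G.outE v = {e} ∧ e ∈ G.Ee) ∧ (∃ f, G.inE v = {f} ∧ f ∈ G.Ei)

/-- The (undirected) adjacency relation of the underlying graph. -/
def Adj (a b : V) : Prop := (a, b) ∈ G.E ∨ (b, a) ∈ G.E

/-- `G` is a BCR diagram: edges join distinct vertices, internal edges are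
edges, the underlying graph is connected, and every vertex satisfies one of
the five conditions. -/
def IsBCR : Prop :=
  (∀ e ∈ G.E, e.1 ≠ e.2) ∧
  G.Ei ⊆ G.E ∧
  (∀ v w : V, Relation.ReflTransGen G.Adj v w) ∧
  (∀ v : V, G.Cond1 v ∨ G.Cond2 v ∨ G.Cond3 v ∨ G.Cond4 v ∨ G.Cond5 v)

end DiGraph

/-- An isomorphism of diagrams is a bijection between the vertex sets
preserving the partition into internal and external vertices and inducing a
bijection between the edge sets preserving the partition into internal and
external edges. -/
def DiGraph.Isom {V : Type*} {W : Type*} [DecidableEq V] [Fintype V]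
    [DecidableEq W] [Fintype W] (G : DiGraph V) (H : DiGraph W) : Prop :=
  ∃ f : V ≃ W,
    (∀ a b : V, (a, b) ∈ G.E ↔ (f a, f b) ∈ H.E) ∧
    (∀ v : V, v ∈ G.Vi ↔ f v ∈ H.Vi) ∧
    (∀ a b : V, (a, b) ∈ G.Ei ↔ (f a, f b) ∈ H.Ei)


section Aux
open DiGraph

section Inst
variable {V : Type*} {W : Type*} [DecidableEq V] [Fintype V] [DecidableEq W] [Fintype W]

instance (G : DiGraph V) (v : V) : Decidable (G.Univalent v) := by
  unfold DiGraph.Univalent; infer_instance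

instance (G : DiGraph V) (v : V) : Decidable (G.Cond1 v) := by
  unfold DiGraph.Cond1; infer_instance
instance (G : DiGraph V) (v : V) : Decidable (G.Cond2 v) := by
  unfold DiGraph.Cond2; infer_instance
instance (G : DiGraph V) (v : V) : Decidable (G.Cond3 v) := by
  unfold DiGraph.Cond3; infer_instance
instance (G : DiGraph V) (v : V) : Decidable (G.Cond4 v) := by
  unfold DiGraph.Cond4; infer_instance
instance (G : DiGraph V) (v : V) : Decidable (G.Cond5 v) := by
  unfold DiGraph.Cond5; infer_instance

instance (G : DiGraph V) (H : DiGraph W) : Decidable (G.Isom H) := by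
  unfold DiGraph.Isom; infer_instance

end Inst

set_option linter.unusedSectionVars false

variable {V : Type*} {W : Type*} [DecidableEq V] [Fintype V] [DecidableEq W] [Fintype W]

lemma DiGraph.Isom.trans {X : Type*} [DecidableEq X] [Fintype X] {G : DiGraph V}
    {H : DiGraph W} {K : DiGraph X} (h1 : G.Isom H) (h2 : H.Isom K) : G.Isom K := by
  obtain ⟨f, hf1, hf2, hf3⟩ := h1
  obtain ⟨g, hg1, hg2, hg3⟩ := h2
  exact ⟨f.trans g, fun a b => (hf1 a b).trans (hg1 _ _), fun v => (hf2 v).trans (hg2 _),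
    fun a b => (hf3 a b).trans (hg3 _ _)⟩

/-- Transport a diagram along an equivalence of vertex types. -/
def DiGraph.transport (e : V ≃ W) (G : DiGraph V) : DiGraph W :=
  ⟨G.E.image (Prod.map e e), G.Vi.image e, G.Ei.image (Prod.map e e)⟩

lemma mem_image_prodMap (e : V ≃ W) (s : Finset (V × V)) (a b : V) :
    (e a, e b) ∈ s.image (Prod.map e e) ↔ (a, b) ∈ s := by
  simp only [Finset.mem_image, Prod.map, Prod.ext_iff]
  constructor
  · rintro ⟨⟨x, y⟩, h, hx, hy⟩
    rwa [← e.injective hx, ← e.injective hy]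
  · intro h
    exact ⟨(a, b), h, rfl, rfl⟩

lemma mem_image_equiv (e : V ≃ W) (s : Finset V) (a : V) :
    e a ∈ s.image e ↔ a ∈ s := by
  simp only [Finset.mem_image]
  constructor
  · rintro ⟨x, h, hx⟩
    rwa [← e.injective hx]
  · intro h; exact ⟨a, h, rfl⟩

lemma isom_transport (e : V ≃ W) (G : DiGraph V) : G.Isom (G.transport e) :=
  ⟨e, fun a b => (mem_image_prodMap e G.E a b).symm,
    fun v => (mem_image_equiv e G.Vi v).symm,
    fun a b => (mem_image_prodMap e G.Ei a b).symm⟩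

/-- An isomorphism transports the BCR property. -/
lemma isBCR_of_isom {G : DiGraph V} {H : DiGraph W} (hGH : G.Isom H) (hG : G.IsBCR) :
    H.IsBCR := by
  obtain ⟨f, h1, h2, h3⟩ := hGH
  obtain ⟨hloop, hsub, hconn, hcond⟩ := hG
  have hinj : Function.Injective (Prod.map (⇑f) (⇑f)) := f.injective.prodMap f.injective
  have hE : H.E = G.E.image (Prod.map f f) := by
    ext ⟨a, b⟩
    rw [show ((a : W), b) = (f (f.symm a), f (f.symm b)) by simp,
      mem_image_prodMap, ← h1]
  have hEi : H.Ei = G.Ei.image (Prod.map f f) := by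
    ext ⟨a, b⟩
    rw [show ((a : W), b) = (f (f.symm a), f (f.symm b)) by simp,
      mem_image_prodMap, ← h3]
  have hVi : H.Vi = G.Vi.image f := by
    ext a
    rw [show (a : W) = f (f.symm a) by simp, mem_image_equiv, ← h2]
  have hEe : ∀ p : V × V, p ∈ G.Ee ↔ Prod.map f f p ∈ H.Ee := by
    rintro ⟨a, b⟩
    simp only [DiGraph.Ee, Finset.mem_sdiff, Prod.map]
    rw [← h1, ← h3]
  have hout : ∀ v, H.outE (f v) = (G.outE v).image (Prod.map f f) := by
    intro v
    rw [DiGraph.outE, hE, Finset.filter_image]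
    congr 1
    apply Finset.filter_congr
    intro x _
    simp only [Prod.map, eq_iff_iff]
    exact ⟨fun h => f.injective h, fun h => by rw [h]⟩
  have hin : ∀ v, H.inE (f v) = (G.inE v).image (Prod.map f f) := by
    intro v
    rw [DiGraph.inE, hE, Finset.filter_image]
    congr 1
    apply Finset.filter_congr
    intro x _
    simp only [Prod.map, eq_iff_iff]
    exact ⟨fun h => f.injective h, fun h => by rw [h]⟩
  have hval : ∀ v, H.valence (f v) = G.valence v := by
    intro v
    rw [DiGraph.valence, DiGraph.valence, hout, hin,
      Finset.card_image_of_injective _ hinj, Finset.card_image_of_injective _ hinj]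
  have huni : ∀ v, G.Univalent v → H.Univalent (f v) := by
    intro v h
    rw [DiGraph.Univalent, hval]; exact h
  refine ⟨?_, ?_, ?_, ?_⟩
  · rintro ⟨a, b⟩ hab h
    have h' : a = b := h
    subst h'
    clear h
    have : (f.symm a, f.symm a) ∈ G.E := (h1 _ _).2 (by simpa using hab)
    exact hloop _ this rfl
  · rintro ⟨a, b⟩ hab
    have : (f.symm a, f.symm b) ∈ G.Ei := (h3 _ _).2 (by simpa using hab)
    have := hsub this
    have := (h1 _ _).1 this
    simpa using this
  · intro v w
    have := hconn (f.symm v) (f.symm w)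
    have hadj : ∀ a b : V, G.Adj a b → H.Adj (f a) (f b) := by
      intro a b h
      exact h.imp (fun h' => (h1 a b).1 h') (fun h' => (h1 b a).1 h')
    have : Relation.ReflTransGen H.Adj (f (f.symm v)) (f (f.symm w)) :=
      Relation.ReflTransGen.lift f hadj _ _ this
    simpa using this
  · intro w
    obtain ⟨v, rfl⟩ := f.surjective w
    rcases hcond v with c | c | c | c | c
    · obtain ⟨hv, ⟨e, he, hee⟩, ⟨e1, f1, hne, hine, he1, hf1⟩, ⟨e2, hm2, hu2⟩⟩ := c
      refine Or.inl ⟨fun h => hv ((h2 v).2 h),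
        ⟨Prod.map f f e, by rw [hout, he, Finset.image_singleton], (hEe e).1 hee⟩,
        ⟨Prod.map f f e1, Prod.map f f f1, fun h => hne (hinj h),
          (by rw [hin, hine, show ({e1, f1} : Finset (V × V)) = insert e1 {f1} from rfl,
            Finset.image_insert, Finset.image_singleton]),
          (hEe e1).1 he1, (hEe f1).1 hf1⟩,
        ⟨Prod.map f f e2, by rw [hin]; exact Finset.mem_image_of_mem _ hm2,
          huni e2.1 hu2⟩⟩
    · obtain ⟨hv, ⟨e, he, hee⟩, ⟨e1, f1, hne, hine, he1, hf1, hu1⟩⟩ := c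
      refine Or.inr (Or.inl ⟨(h2 v).1 hv,
        ⟨Prod.map f f e, by rw [hout, he, Finset.image_singleton], (h3 e.1 e.2).1 hee⟩,
        ⟨Prod.map f f e1, Prod.map f f f1, fun h => hne (hinj h),
          (by rw [hin, hine, show ({e1, f1} : Finset (V × V)) = insert e1 {f1} from rfl,
            Finset.image_insert, Finset.image_singleton]),
          (h3 e1.1 e1.2).1 he1, (hEe f1).1 hf1, huni f1.1 hu1⟩⟩)
    · obtain ⟨hv, ⟨e, he, hee⟩, hin0⟩ := c
      exact Or.inr (Or.inr (Or.inl ⟨(h2 v).1 hv,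
        ⟨Prod.map f f e, by rw [hout, he, Finset.image_singleton], (hEe e).1 hee⟩,
        by rw [hin, hin0, Finset.image_empty]⟩))
    · obtain ⟨hv, ⟨e, he, hee⟩, ⟨e1, hine, he1⟩⟩ := c
      exact Or.inr (Or.inr (Or.inr (Or.inl ⟨(h2 v).1 hv,
        ⟨Prod.map f f e, by rw [hout, he, Finset.image_singleton], (h3 e.1 e.2).1 hee⟩,
        ⟨Prod.map f f e1, by rw [hin, hine, Finset.image_singleton], (hEe e1).1 he1⟩⟩)))
    · obtain ⟨hv, ⟨e, he, hee⟩, ⟨e1, hine, he1⟩⟩ := c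
      exact Or.inr (Or.inr (Or.inr (Or.inr ⟨(h2 v).1 hv,
        ⟨Prod.map f f e, by rw [hout, he, Finset.image_singleton], (hEe e).1 hee⟩,
        ⟨Prod.map f f e1, by rw [hin, hine, Finset.image_singleton], (h3 e1.1 e1.2).1 he1⟩⟩)))

/-- The five representative diagrams. -/
def Gs5 : Fin 5 → DiGraph (Fin 4) :=
  ![⟨{(0,1),(1,0),(2,0),(3,1)}, {2,3}, ∅⟩,
    ⟨{(0,1),(1,0),(2,0),(3,1)}, {0,1,2,3}, {(0,1),(1,0)}⟩,
    ⟨{(0,1),(1,2),(2,0),(3,0)}, {1,2,3}, {(1,2)}⟩,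
    ⟨{(0,1),(1,2),(2,0),(3,0)}, {0,1,2,3}, {(0,1),(2,0)}⟩,
    ⟨{(0,1),(1,2),(2,3),(3,0)}, {0,1,2,3}, {(0,1),(2,3)}⟩]

def E4 (g : Fin 4 → Fin 4) : Finset (Fin 4 × Fin 4) :=
  {(0, g 0), (1, g 1), (2, g 2), (3, g 3)}

def H4 (g : Fin 4 → Fin 4) (Vi : Finset (Fin 4)) (Ei : Finset (Fin 4 × Fin 4)) :
    DiGraph (Fin 4) := ⟨E4 g, Vi, Ei⟩

/-- A computation-friendly version of the local conditions for a functional graph. -/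
def Qloc (G : DiGraph (Fin 4)) (g : Fin 4 → Fin 4) : Prop :=
  ∀ v,
    (v ∉ G.Vi ∧ (v, g v) ∉ G.Ei ∧ (G.inE v).card = 2 ∧ (∀ x ∈ G.inE v, x ∉ G.Ei) ∧
      (∃ x ∈ G.inE v, G.Univalent x.1)) ∨
    (v ∈ G.Vi ∧ (v, g v) ∈ G.Ei ∧ (G.inE v).card = 2 ∧ (∃ x ∈ G.inE v, x ∈ G.Ei) ∧
      (∃ x ∈ G.inE v, x ∉ G.Ei ∧ G.Univalent x.1)) ∨
    (v ∈ G.Vi ∧ (v, g v) ∉ G.Ei ∧ G.inE v = ∅) ∨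
    (v ∈ G.Vi ∧ (v, g v) ∈ G.Ei ∧ (G.inE v).card = 1 ∧ (∀ x ∈ G.inE v, x ∉ G.Ei)) ∨
    (v ∈ G.Vi ∧ (v, g v) ∉ G.Ei ∧ (G.inE v).card = 1 ∧ (∀ x ∈ G.inE v, x ∈ G.Ei))

set_option synthInstance.maxSize 400 in
set_option maxHeartbeats 1000000 in
instance (G : DiGraph (Fin 4)) (g : Fin 4 → Fin 4) : Decidable (Qloc G g) := by
  unfold Qloc; infer_instance

/-- No nontrivial subsets closed under the edge relation. -/
def ClosedTriv (E : Finset (Fin 4 × Fin 4)) : Prop :=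
  ∀ S : Finset (Fin 4), (∀ e ∈ E, (e.1 ∈ S ↔ e.2 ∈ S)) → S = ∅ ∨ S = Finset.univ

instance (E : Finset (Fin 4 × Fin 4)) : Decidable (ClosedTriv E) := by
  unfold ClosedTriv; infer_instance

/-- Select a subset of the four edges by boolean flags. -/
def Esel (g : Fin 4 → Fin 4) (p q r s : Bool) : Finset (Fin 4 × Fin 4) :=
  ((if p then {(0, g 0)} else ∅) ∪ (if q then {(1, g 1)} else ∅)) ∪
    ((if r then {(2, g 2)} else ∅) ∪ (if s then {(3, g 3)} else ∅))

/-- A cheap necessary condition on the internal vertex set: external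
vertices have in-degree two. -/
def Vpre (g : Fin 4 → Fin 4) (Vi : Finset (Fin 4)) : Prop :=
  ∀ v, v ∈ Vi ∨ ((E4 g).filter (fun e => e.2 = v)).card = 2

instance (g : Fin 4 → Fin 4) (Vi : Finset (Fin 4)) : Decidable (Vpre g Vi) := by
  unfold Vpre; infer_instance

set_option synthInstance.maxSize 400 in
set_option synthInstance.maxHeartbeats 400000 in
set_option maxHeartbeats 4000000 in
set_option maxRecDepth 10000 in
theorem core : ∀ a b c d : Fin 4, a ≠ 0 → b ≠ 1 → c ≠ 2 → d ≠ 3 →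
    ClosedTriv (E4 ![a, b, c, d]) →
    ∀ Vi : Finset (Fin 4), Vpre ![a, b, c, d] Vi → ∀ p q r s : Bool,
    Qloc (H4 ![a, b, c, d] Vi (Esel ![a, b, c, d] p q r s)) ![a, b, c, d] →
    ∃ i : Fin 5, (H4 ![a, b, c, d] Vi (Esel ![a, b, c, d] p q r s)).Isom (Gs5 i) := by
  decide

lemma reach_mem {V : Type*} [DecidableEq V] [Fintype V] {G : DiGraph V} {S : Finset V}
    (hS : ∀ e ∈ G.E, (e.1 ∈ S ↔ e.2 ∈ S)) {v w : V}
    (h : Relation.ReflTransGen G.Adj v w) (hv : v ∈ S) : w ∈ S := by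
  induction h with
  | refl => exact hv
  | tail _ hadj ih =>
    rcases hadj with h' | h'
    · exact (hS _ h').1 ih
    · exact (hS _ h').2 ih

lemma adj_symm {V : Type*} [DecidableEq V] [Fintype V] (G : DiGraph V) :
    Symmetric G.Adj := fun _ _ h => Or.symm h

lemma conn_of_hub {V : Type*} [DecidableEq V] [Fintype V] (G : DiGraph V) (c : V)
    (h : ∀ v, Relation.ReflTransGen G.Adj c v) :
    ∀ v w, Relation.ReflTransGen G.Adj v w := fun v w =>
  ((@Relation.ReflTransGen.symmetric _ G.Adj ⟨adj_symm G⟩).symm _ _ (h v)).trans (h w)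

end Aux
universe u

set_option maxHeartbeats 1000000 in
lemma gs5_conds : ∀ i : Fin 5, ∀ v : Fin 4,
    (Gs5 i).Cond1 v ∨ (Gs5 i).Cond2 v ∨ (Gs5 i).Cond3 v ∨ (Gs5 i).Cond4 v ∨ (Gs5 i).Cond5 v := by
  decide

lemma gs5_isBCR : ∀ i, (Gs5 i).IsBCR := by
  intro i
  refine ⟨by fin_cases i <;> decide, by fin_cases i <;> decide, ?_, gs5_conds i⟩
  apply conn_of_hub _ 0
  intro v
  fin_cases i <;> fin_cases v
  · exact Relation.ReflTransGen.refl
  · exact Relation.ReflTransGen.single (Or.inl (by decide))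
  · exact Relation.ReflTransGen.single (Or.inr (by decide))
  · exact (Relation.ReflTransGen.single (show (Gs5 0).Adj 0 1 from Or.inl (by decide))).tail
      (Or.inr (by decide))
  · exact Relation.ReflTransGen.refl
  · exact Relation.ReflTransGen.single (Or.inl (by decide))
  · exact Relation.ReflTransGen.single (Or.inr (by decide))
  · exact (Relation.ReflTransGen.single (show (Gs5 1).Adj 0 1 from Or.inl (by decide))).tail
      (Or.inr (by decide))
  · exact Relation.ReflTransGen.refl
  · exact Relation.ReflTransGen.single (Or.inl (by decide))
  · exact Relation.ReflTransGen.single (Or.inr (by decide))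
  · exact Relation.ReflTransGen.single (Or.inr (by decide))
  · exact Relation.ReflTransGen.refl
  · exact Relation.ReflTransGen.single (Or.inl (by decide))
  · exact Relation.ReflTransGen.single (Or.inr (by decide))
  · exact Relation.ReflTransGen.single (Or.inr (by decide))
  · exact Relation.ReflTransGen.refl
  · exact Relation.ReflTransGen.single (Or.inl (by decide))
  · exact (Relation.ReflTransGen.single (show (Gs5 4).Adj 0 1 from Or.inl (by decide))).tail
      (Or.inl (by decide))
  · exact Relation.ReflTransGen.single (Or.inr (by decide))

set_option maxHeartbeats 1000000 in
lemma gs5_noniso : ∀ i j : Fin 5, DiGraph.Isom (Gs5 i) (Gs5 j) → i = j := by decide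

/-- There are exactly five isomorphism classes of BCR diagrams of degree 2
(that is, with 4 vertices). -/
theorem bcr_degree_two_classification :
    ∃ Gs : Fin 5 → DiGraph (Fin 4),
      (∀ i, (Gs i).IsBCR) ∧
      (∀ i j : Fin 5, DiGraph.Isom (Gs i) (Gs j) → i = j) ∧
      (∀ (W : Type u) [DecidableEq W] [Fintype W] (G : DiGraph W),
        G.IsBCR → Fintype.card W = 4 → ∃ i, DiGraph.Isom G (Gs i)) := by
  refine ⟨Gs5, gs5_isBCR, gs5_noniso, ?_⟩
  intro W _ _ G hG hcard
  have e : W ≃ Fin 4 := Fintype.equivFinOfCardEq hcard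
  have hGH : G.Isom (G.transport e) := isom_transport e G
  set H := G.transport e with hHdef
  obtain ⟨hloop, hsub, hconn, hcond⟩ := isBCR_of_isom hGH hG
  -- every vertex has a unique outgoing edge
  have hout : ∀ v, ∃ f, H.outE v = {f} := by
    intro v
    rcases hcond v with c | c | c | c | c <;>
    · obtain ⟨f, hf, -⟩ := c.2.1
      exact ⟨f, hf⟩
  choose eo heo using hout
  set g : Fin 4 → Fin 4 := fun v => (eo v).2 with hgdef
  have hfst : ∀ v, (eo v).1 = v := by
    intro v
    have h1 : eo v ∈ H.outE v := by rw [heo v]; exact Finset.mem_singleton_self _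
    exact (Finset.mem_filter.1 h1).2
  have hveo : ∀ v, (v, g v) = eo v := fun v => Prod.ext (hfst v).symm rfl
  have hmemE : ∀ v, (v, g v) ∈ H.E := by
    intro v
    rw [hveo v]
    have h1 : eo v ∈ H.outE v := by rw [heo v]; exact Finset.mem_singleton_self _
    exact (Finset.mem_filter.1 h1).1
  have huniq : ∀ a bb, (a, bb) ∈ H.E → bb = g a := by
    intro a bb h
    have h2 : (a, bb) ∈ H.outE a := Finset.mem_filter.2 ⟨h, rfl⟩
    rw [heo a] at h2
    have h3 := Finset.mem_singleton.1 h2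
    have h4 := congrArg Prod.snd h3
    rw [hgdef]
    exact h4
  have hfix : ∀ v, g v ≠ v := by
    intro v h
    exact hloop (v, g v) (hmemE v) h.symm
  have hEg : H.E = E4 g := by
    ext x
    obtain ⟨x1, x2⟩ := x
    constructor
    · intro hx
      have h1 := huniq x1 x2 hx
      subst h1
      fin_cases x1 <;> simp [E4]
    · intro hx
      simp only [E4, Finset.mem_insert, Finset.mem_singleton] at hx
      rcases hx with h | h | h | h <;> rw [h] <;> exact hmemE _
  -- the out-edge of v in terms of g
  have houte : ∀ v x, H.outE v = {x} → (v, g v) = x := by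
    intro v x hx
    rw [hveo v]
    exact Finset.singleton_inj.1 ((heo v).symm.trans hx)
  -- local conditions in computation-friendly form
  have hQ : Qloc H g := by
    intro v
    rcases hcond v with c | c | c | c | c
    · obtain ⟨hv, ⟨e1, he1, hee1⟩, ⟨e2, f2, hne, hine, he2, hf2⟩, ⟨e3, hm3, hu3⟩⟩ := c
      refine Or.inl ⟨hv, ?_, ?_, ?_, ⟨e3, hm3, hu3⟩⟩
      · rw [houte v e1 he1]; exact (Finset.mem_sdiff.1 hee1).2
      · rw [hine]; exact Finset.card_pair hne
      · intro x hx
        rw [hine] at hx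
        rcases Finset.mem_insert.1 hx with h | h
        · rw [h]; exact (Finset.mem_sdiff.1 he2).2
        · rw [Finset.mem_singleton.1 h]; exact (Finset.mem_sdiff.1 hf2).2
    · obtain ⟨hv, ⟨e1, he1, hee1⟩, ⟨e2, f2, hne, hine, he2, hf2, hu2⟩⟩ := c
      refine Or.inr (Or.inl ⟨hv, ?_, ?_, ?_, ?_⟩)
      · rw [houte v e1 he1]; exact hee1
      · rw [hine]; exact Finset.card_pair hne
      · exact ⟨e2, by rw [hine]; exact Finset.mem_insert_self _ _, he2⟩
      · exact ⟨f2, by rw [hine]; exact Finset.mem_insert_of_mem (Finset.mem_singleton_self _),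
          (Finset.mem_sdiff.1 hf2).2, hu2⟩
    · obtain ⟨hv, ⟨e1, he1, hee1⟩, hin0⟩ := c
      exact Or.inr (Or.inr (Or.inl ⟨hv,
        by rw [houte v e1 he1]; exact (Finset.mem_sdiff.1 hee1).2, hin0⟩))
    · obtain ⟨hv, ⟨e1, he1, hee1⟩, ⟨f1, hinf, hf1⟩⟩ := c
      refine Or.inr (Or.inr (Or.inr (Or.inl ⟨hv, ?_, ?_, ?_⟩)))
      · rw [houte v e1 he1]; exact hee1
      · rw [hinf]; exact Finset.card_singleton _
      · intro x hx
        rw [hinf] at hx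
        rw [Finset.mem_singleton.1 hx]
        exact (Finset.mem_sdiff.1 hf1).2
    · obtain ⟨hv, ⟨e1, he1, hee1⟩, ⟨f1, hinf, hf1⟩⟩ := c
      refine Or.inr (Or.inr (Or.inr (Or.inr ⟨hv, ?_, ?_, ?_⟩)))
      · rw [houte v e1 he1]; exact (Finset.mem_sdiff.1 hee1).2
      · rw [hinf]; exact Finset.card_singleton _
      · intro x hx
        rw [hinf] at hx
        rw [Finset.mem_singleton.1 hx]
        exact hf1
  -- closed sets are trivial
  have hCT : ClosedTriv (E4 g) := by
    intro S hS
    rw [← hEg] at hS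
    rcases S.eq_empty_or_nonempty with h | ⟨v0, hv0⟩
    · exact Or.inl h
    · exact Or.inr (Finset.eq_univ_iff_forall.2 fun w => reach_mem hS (hconn v0 w) hv0)
  -- the internal edges as boolean selection
  have hEi : H.Ei = Esel g (decide ((0, g 0) ∈ H.Ei)) (decide ((1, g 1) ∈ H.Ei))
      (decide ((2, g 2) ∈ H.Ei)) (decide ((3, g 3) ∈ H.Ei)) := by
    ext x
    simp only [Esel, Finset.mem_union]
    constructor
    · intro hx
      have hxE := hsub hx
      rw [hEg] at hxE
      simp only [E4, Finset.mem_insert, Finset.mem_singleton] at hxE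
      rcases hxE with h | h | h | h <;> subst h
      · exact Or.inl (Or.inl (by rw [if_pos (decide_eq_true hx)]; exact Finset.mem_singleton_self _))
      · exact Or.inl (Or.inr (by rw [if_pos (decide_eq_true hx)]; exact Finset.mem_singleton_self _))
      · exact Or.inr (Or.inl (by rw [if_pos (decide_eq_true hx)]; exact Finset.mem_singleton_self _))
      · exact Or.inr (Or.inr (by rw [if_pos (decide_eq_true hx)]; exact Finset.mem_singleton_self _))
    · intro hx
      rcases hx with (h | h) | (h | h) <;> revert h <;> split <;>
        first
        | (intro h; rw [Finset.mem_singleton.1 h]; exact of_decide_eq_true (by assumption))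
        | (intro h; exact absurd h (Finset.notMem_empty _))
  have hg4 : ![g 0, g 1, g 2, g 3] = g := by
    funext v
    fin_cases v <;> rfl
  have hH4 : H4 g H.Vi (Esel g (decide ((0, g 0) ∈ H.Ei)) (decide ((1, g 1) ∈ H.Ei))
      (decide ((2, g 2) ∈ H.Ei)) (decide ((3, g 3) ∈ H.Ei))) = H := by
    rw [H4, ← hEg, ← hEi]
  have hVpre : Vpre g H.Vi := by
    intro v
    rcases hQ v with c | c | c | c | c
    · right
      have : (E4 g).filter (fun e => e.2 = v) = H.inE v := by rw [DiGraph.inE, hEg]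
      rw [this]
      exact c.2.2.1
    all_goals exact Or.inl c.1
  have hcore := core (g 0) (g 1) (g 2) (g 3) (hfix 0) (hfix 1) (hfix 2) (hfix 3)
  rw [hg4] at hcore
  have hcore2 := hcore hCT H.Vi hVpre (decide ((0, g 0) ∈ H.Ei)) (decide ((1, g 1) ∈ H.Ei))
    (decide ((2, g 2) ∈ H.Ei)) (decide ((3, g 3) ∈ H.Ei))
  rw [hH4] at hcore2
  obtain ⟨i, hi⟩ := hcore2 hQ
  exact ⟨i, hGH.trans hi⟩
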